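/- Let k \geq 3, n - k \geq 1, and G = L_c(S(CS_{k,n-k})). Then the first Zagreb index of G is M_1(G) = n^3 + (11-3k)n^2 + (3k^2 - 22k + 40)n - k^3 + 11k^2 - 32k + 14. -/

import Mathlib

open scoped Classical
open Finset

noncomputable section

namespace Zagreb

variable {V : Type*}

/-- First Zagreb index. -/
def M1 (G : SimpleGraph V) [Fintype V] : ℕ :=
  ∑ v, (G.degree v) ^ 2

/-- Second Zagreb index. -/
def M2 (G : SimpleGraph V) [Fintype V] : ℕ :=
  ∑ e ∈ G.edgeFinset,
    Sym2.lift ⟨fun u v => G.degree u * G.degree v, fun _ _ => mul_comm _ _⟩ e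

/-- First Zagreb coindex: sum over unordered pairs of distinct non-adjacent vertices. -/
def M1bar (G : SimpleGraph V) [Fintype V] : ℕ :=
  ∑ e ∈ Gᶜ.edgeFinset,
    Sym2.lift ⟨fun u v => G.degree u + G.degree v, fun _ _ => add_comm _ _⟩ e

/-- Second Zagreb coindex. -/
def M2bar (G : SimpleGraph V) [Fintype V] : ℕ :=
  ∑ e ∈ Gᶜ.edgeFinset,
    Sym2.lift ⟨fun u v => G.degree u * G.degree v, fun _ _ => mul_comm _ _⟩ e

/-- The cycle-star graph: a cycle of length `k` together with `l` leaves
attached to the cycle vertex `0`. -/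
def cycleStar (k l : ℕ) : SimpleGraph (Fin k ⊕ Fin l) where
  Adj x y :=
    match x, y with
    | Sum.inl i, Sum.inl j => i ≠ j ∧ ((i.val + 1) % k = j.val ∨ (j.val + 1) % k = i.val)
    | Sum.inl i, Sum.inr _ => i.val = 0
    | Sum.inr _, Sum.inl i => i.val = 0
    | Sum.inr _, Sum.inr _ => False
  symm := ⟨by
    rintro (i | a) (j | b) h
    · exact ⟨Ne.symm h.1, h.2.symm⟩
    · exact h
    · exact h
    · exact h
    ⟩
  loopless := ⟨by
    rintro (i | a) h
    · exact h.1 rfl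
    · exact h
    ⟩

/-- The subdivision graph: each edge is replaced by a path of length 2. -/
def subdivision (G : SimpleGraph V) : SimpleGraph (V ⊕ G.edgeSet) where
  Adj x y :=
    match x, y with
    | Sum.inl v, Sum.inr e => v ∈ (e : Sym2 V)
    | Sum.inr e, Sum.inl v => v ∈ (e : Sym2 V)
    | _, _ => False
  symm := ⟨by rintro (v | e) (w | f) h <;> simp_all⟩
  loopless := ⟨by rintro (v | e) h <;> simp_all⟩

/-- The line graph of `G`. -/
def lineGraph (G : SimpleGraph V) : SimpleGraph G.edgeSet where
  Adj e f := e ≠ f ∧ ∃ v, v ∈ (e : Sym2 V) ∧ v ∈ (f : Sym2 V)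
  symm := ⟨by
    rintro e f ⟨hne, v, hv1, hv2⟩
    exact ⟨hne.symm, v, hv2, hv1⟩⟩
  loopless := ⟨by rintro e ⟨hne, _⟩; exact hne rfl⟩

/-- A cut-vertex: a vertex of a connected graph whose removal disconnects it. -/
def IsCutVertex (G : SimpleGraph V) (v : V) : Prop :=
  G.Connected ∧ ¬ (G.induce {u | u ≠ v}).Connected

/-- The line cut-vertex graph of `G`: vertices are the edges and cut-vertices of `G`;
two vertices are adjacent iff the corresponding edges share an endpoint, or one is
an edge incident to the other, a cut-vertex. -/
def lineCutGraph (G : SimpleGraph V) :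
    SimpleGraph (G.edgeSet ⊕ {v : V // IsCutVertex G v}) where
  Adj x y :=
    match x, y with
    | Sum.inl e, Sum.inl f => e ≠ f ∧ ∃ v, v ∈ (e : Sym2 V) ∧ v ∈ (f : Sym2 V)
    | Sum.inl e, Sum.inr c => (c : V) ∈ (e : Sym2 V)
    | Sum.inr c, Sum.inl e => (c : V) ∈ (e : Sym2 V)
    | Sum.inr _, Sum.inr _ => False
  symm := ⟨by
    rintro (e | c) (f | d) h
    · exact ⟨Ne.symm h.1, h.2.choose, h.2.choose_spec.2, h.2.choose_spec.1⟩
    · exact h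
    · exact h
    · exact h
    ⟩
  loopless := ⟨by
    rintro (e | c) h
    · exact h.1 rfl
    · exact h
    ⟩

namespace CS

variable {k l : ℕ}

def fsucc (i : Fin k) : Fin k := ⟨(i.1+1) % k, Nat.mod_lt _ i.pos⟩

def hb (hk : 0 < k) : Fin k := ⟨0, hk⟩

/-- cycle edge i -/
def ceS (l : ℕ) (i : Fin k) : Sym2 (Fin k ⊕ Fin l) := s(.inl i, .inl (fsucc i))

/-- pendant edge a -/
def peS (hk : 0 < k) (a : Fin l) : Sym2 (Fin k ⊕ Fin l) := s(.inl (hb hk), .inr a)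

variable (hk : 3 ≤ k)

lemma kpos : 3 ≤ k → 0 < k := by omega

lemma fsucc_ne (i : Fin k) (hk : 2 ≤ k) : fsucc i ≠ i := by
  simp only [fsucc, Ne, Fin.ext_iff]
  intro h
  rcases Nat.lt_or_ge (i.1+1) k with h' | h'
  · rw [Nat.mod_eq_of_lt h'] at h; omega
  · have : i.1 + 1 = k := by omega
    rw [this, Nat.mod_self] at h; omega

lemma adj_ce (i : Fin k) (hk2 : 2 ≤ k) : (cycleStar k l).Adj (.inl i) (.inl (fsucc i)) := by
  refine ⟨by simpa using (fsucc_ne i hk2).symm, Or.inl rfl⟩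

lemma adj_pe (hk : 0 < k) (a : Fin l) : (cycleStar k l).Adj (.inl (hb hk)) (.inr a) := rfl

lemma ce_mem (i : Fin k) (hk2 : 2 ≤ k) : ceS l i ∈ (cycleStar k l).edgeSet := adj_ce (l := l) i hk2

lemma pe_mem (hk : 0 < k) (a : Fin l) : peS hk a ∈ (cycleStar k l).edgeSet := adj_pe hk a

lemma edge_char (hk : 3 ≤ k) (e : Sym2 (Fin k ⊕ Fin l)) :
    e ∈ (cycleStar k l).edgeSet ↔ (∃ i, e = ceS l i) ∨ ∃ a, e = peS (kpos hk) a := by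
  constructor
  · induction e with
  | _ x y =>
    intro h
    rw [SimpleGraph.mem_edgeSet] at h
    match x, y with
    | Sum.inl i, Sum.inl j =>
      obtain ⟨hne, h1 | h2⟩ := h
      · left; exact ⟨i, by rw [ceS]; congr 1; simp [fsucc, Fin.ext_iff, h1]⟩
      · left; refine ⟨j, ?_⟩
        rw [ceS, Sym2.eq_swap]; congr 1; simp [fsucc, Fin.ext_iff, h2]
    | Sum.inl i, Sum.inr a =>
      right
      have h' : i.val = 0 := h
      exact ⟨a, by rw [peS]; congr 2; simp [hb, Fin.ext_iff, h']⟩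
    | Sum.inr a, Sum.inl i =>
      right; refine ⟨a, ?_⟩
      have h' : i.val = 0 := h
      rw [peS, Sym2.eq_swap]; congr 2; simp [hb, Fin.ext_iff, h']
    | Sum.inr a, Sum.inr b => exact absurd h (by simp [cycleStar])
  · rintro (⟨i, rfl⟩ | ⟨a, rfl⟩)
    · exact ce_mem i (by omega)
    · exact pe_mem _ a

lemma ceS_inj (hk : 3 ≤ k) {i j : Fin k} (h : ceS l i = ceS l j) : i = j := by
  rw [ceS, ceS, Sym2.eq_iff] at h
  rcases h with ⟨h1, h2⟩ | ⟨h1, h2⟩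
  · exact Sum.inl.inj h1
  · -- i = fsucc j and fsucc i = j : contradiction with k ≥ 3
    have e1 : i = fsucc j := Sum.inl.inj h1
    have e2 : fsucc i = j := Sum.inl.inj h2
    exfalso
    have h1' : i.1 = (j.1+1) % k := by rw [e1]; rfl
    have h2' : j.1 = (i.1+1) % k := by rw [← e2]; rfl
    have hik := i.2; have hjk := j.2
    rcases Nat.lt_or_ge (j.1+1) k with h' | h'
    · rw [Nat.mod_eq_of_lt h'] at h1'
      rcases Nat.lt_or_ge (i.1+1) k with h'' | h''
      · rw [Nat.mod_eq_of_lt h''] at h2'; omega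
      · have : i.1+1 = k := by omega
        rw [this, Nat.mod_self] at h2'; omega
    · have : j.1+1 = k := by omega
      rw [this, Nat.mod_self] at h1'
      rcases Nat.lt_or_ge (i.1+1) k with h'' | h''
      · rw [Nat.mod_eq_of_lt h''] at h2'; omega
      · have : i.1+1 = k := by omega
        rw [this, Nat.mod_self] at h2'; omega

lemma ceS_ne_peS (i : Fin k) (hk : 0 < k) (a : Fin l) : ceS l i ≠ peS hk a := by
  intro h
  rw [ceS, peS, Sym2.eq_iff] at h
  rcases h with ⟨h1, h2⟩ | ⟨h1, h2⟩ <;> simp_all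

lemma peS_inj (hk : 0 < k) {a b : Fin l} (h : peS hk a = peS hk b) : a = b := by
  rw [peS, peS, Sym2.eq_iff] at h
  rcases h with ⟨h1, h2⟩ | ⟨h1, h2⟩ <;> simp_all

lemma mem_ceS (v : Fin k ⊕ Fin l) (i : Fin k) :
    v ∈ ceS l i ↔ v = .inl i ∨ v = .inl (fsucc i) := Sym2.mem_iff

lemma mem_peS (hk : 0 < k) (v : Fin k ⊕ Fin l) (a : Fin l) :
    v ∈ peS hk a ↔ v = .inl (hb hk) ∨ v = .inr a := Sym2.mem_iff

end CS

namespace CS2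
open CS

variable {k l : ℕ}

abbrev V1 (k l : ℕ) := (Fin k ⊕ Fin l) ⊕ ((cycleStar k l).edgeSet : Type)

abbrev SG (k l : ℕ) : SimpleGraph (V1 k l) := subdivision (cycleStar k l)

def ceE (l : ℕ) (hk : 3 ≤ k) (i : Fin k) : (cycleStar k l).edgeSet :=
  ⟨ceS l i, ce_mem i (by omega)⟩

def peE (hk : 3 ≤ k) (a : Fin l) : (cycleStar k l).edgeSet :=
  ⟨peS (kpos hk) a, pe_mem _ a⟩

lemma SG_adj_iff (v : Fin k ⊕ Fin l) (e : (cycleStar k l).edgeSet) :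
    (SG k l).Adj (.inl v) (.inr e) ↔ v ∈ (e : Sym2 (Fin k ⊕ Fin l)) := Iff.rfl

lemma SG_adj_iff' (v : Fin k ⊕ Fin l) (e : (cycleStar k l).edgeSet) :
    (SG k l).Adj (.inr e) (.inl v) ↔ v ∈ (e : Sym2 (Fin k ⊕ Fin l)) := Iff.rfl

lemma SG_not_adj_ll (v w : Fin k ⊕ Fin l) : ¬ (SG k l).Adj (.inl v) (.inl w) := fun h => h

lemma SG_not_adj_rr (e f : (cycleStar k l).edgeSet) : ¬ (SG k l).Adj (.inr e) (.inr f) := fun h => h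

/-- edge parameter type -/
abbrev EP (k l : ℕ) := (Fin k ⊕ Fin l) × Bool

variable (hk : 3 ≤ k)

/-- the vertex-end of the subdivided half-edge -/
def Fv (hk : 3 ≤ k) : EP k l → Fin k ⊕ Fin l
  | (.inl i, false) => .inl i
  | (.inl i, true) => .inl (fsucc i)
  | (.inr _, false) => .inl (hb (kpos hk))
  | (.inr a, true) => .inr a

/-- the edge-end of the subdivided half-edge -/
def Fe (l : ℕ) (hk : 3 ≤ k) : EP k l → (cycleStar k l).edgeSet
  | (.inl i, _) => ceE l hk i
  | (.inr a, _) => peE hk a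

lemma Fv_mem_Fe (p : EP k l) : Fv hk p ∈ ((Fe l hk p : (cycleStar k l).edgeSet) : Sym2 (Fin k ⊕ Fin l)) := by
  rcases p with ⟨i | a, _ | _⟩ <;>
    simp [Fv, Fe, ceE, peE, ceS, peS]

def F (p : EP k l) : Sym2 (V1 k l) := s(.inl (Fv hk p), .inr (Fe l hk p))

lemma F_mem (p : EP k l) : F hk p ∈ (SG k l).edgeSet := by
  rw [F, SimpleGraph.mem_edgeSet, SG_adj_iff]
  exact Fv_mem_Fe hk p

def FE (p : EP k l) : ((SG k l).edgeSet : Type) := ⟨F hk p, F_mem hk p⟩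

lemma Fe_inj {p q : EP k l} (h : Fe l hk p = Fe l hk q) : p.1 = q.1 := by
  rcases p with ⟨i | a, bp⟩ <;> rcases q with ⟨j | b, bq⟩ <;>
    simp only [Fe, ceE, peE, Subtype.mk.injEq] at h
  · simp [ceS_inj hk h]
  · exact absurd h (ceS_ne_peS i _ b)
  · exact absurd h.symm (ceS_ne_peS j _ a)
  · simp [peS_inj _ h]

lemma FE_inj : Function.Injective (FE (l := l) hk) := by
  intro p q h
  rw [FE, FE, Subtype.mk.injEq, F, F, Sym2.eq_iff] at h
  have h' : Sum.inl (Fv hk p) = (Sum.inl (Fv hk q) : V1 k l) ∧ Fe l hk p = Fe l hk q := by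
    rcases h with ⟨h1, h2⟩ | ⟨h1, h2⟩
    · exact ⟨h1, Sum.inr.inj h2⟩
    · exact absurd h1 (by simp)
  obtain ⟨hv, he⟩ := h'
  have h1 := Fe_inj hk he
  have hv' := Sum.inl.inj hv
  rcases p with ⟨i | a, bp⟩ <;> rcases q with ⟨j | b, bq⟩
  · have hij : i = j := by simpa using h1
    subst hij
    have hb : bp = bq := by
      rcases bp <;> rcases bq
      · rfl
      · exact absurd (Sum.inl.inj hv') (fsucc_ne i (by omega)).symm
      · exact absurd (Sum.inl.inj hv') (fsucc_ne i (by omega))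
      · rfl
    rw [hb]
  · exact absurd h1 (by simp)
  · exact absurd h1 (by simp)
  · have hab : a = b := by simpa using h1
    subst hab
    have hb : bp = bq := by
      rcases bp <;> rcases bq
      · rfl
      · exact absurd hv' (by simp [Fv])
      · exact absurd hv' (by simp [Fv])
      · rfl
    rw [hb]

lemma FE_surj : Function.Surjective (FE (l := l) hk) := by
  rintro ⟨f, hf⟩
  induction f with
  | _ x y =>
    rw [SimpleGraph.mem_edgeSet] at hf
    have key : ∀ (v : Fin k ⊕ Fin l) (e : (cycleStar k l).edgeSet),
        ∀ (hv : v ∈ (e : Sym2 (Fin k ⊕ Fin l))),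
        ∃ p, FE hk p = ⟨s(Sum.inl v, Sum.inr e), by rwa [SimpleGraph.mem_edgeSet, SG_adj_iff]⟩ := by
      intro v e hv
      obtain ⟨i, hi⟩ | ⟨a, ha⟩ := (edge_char hk e.1).mp e.2
      · have he : e = ceE l hk i := Subtype.ext hi
        subst he
        rw [ceE] at hv
        rcases (mem_ceS v i).mp hv with rfl | rfl
        · exact ⟨(.inl i, false), rfl⟩
        · exact ⟨(.inl i, true), rfl⟩
      · have he : e = peE hk a := Subtype.ext ha
        subst he
        rw [peE] at hv
        rcases (mem_peS _ v a).mp hv with rfl | rfl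
        · exact ⟨(.inr a, false), rfl⟩
        · exact ⟨(.inr a, true), rfl⟩
    match x, y with
    | Sum.inl v, Sum.inr e => exact key v e hf
    | Sum.inr e, Sum.inl v =>
      obtain ⟨p, hp⟩ := key v e hf
      exact ⟨p, by rw [hp]; exact Subtype.ext (Sym2.eq_swap)⟩
    | Sum.inl v, Sum.inl w => exact absurd hf (SG_not_adj_ll v w)
    | Sum.inr e, Sum.inr f => exact absurd hf (SG_not_adj_rr e f)

end CS2

namespace CS3
open CS CS2

variable {k l : ℕ}

def hubV (l : ℕ) (hk : 3 ≤ k) : V1 k l := .inl (.inl (hb (kpos hk)))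
def cV (l : ℕ) (i : Fin k) : V1 k l := .inl (.inl i)
def leafV (a : Fin l) : V1 k l := .inl (.inr a)
def sV (l : ℕ) (hk : 3 ≤ k) (i : Fin k) : V1 k l := .inr (ceE l hk i)
def tV (hk : 3 ≤ k) (a : Fin l) : V1 k l := .inr (peE hk a)

variable (hk : 3 ≤ k)

lemma adj_hub_t (a : Fin l) : (SG k l).Adj (hubV l hk) (tV hk a) := by
  show Sum.inl (hb (kpos hk)) ∈ peS (kpos hk) a
  simp [peS]

lemma adj_t_leaf (a : Fin l) : (SG k l).Adj (tV hk a) (leafV a) := by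
  show Sum.inr a ∈ peS (kpos hk) a
  simp [peS]

lemma adj_c_s (i : Fin k) : (SG k l).Adj (cV l i) (sV l hk i) := by
  show Sum.inl i ∈ ceS l i
  simp [ceS]

lemma adj_s_c' (i : Fin k) : (SG k l).Adj (sV l hk i) (cV l (fsucc i)) := by
  show Sum.inl (fsucc i) ∈ ceS l i
  simp [ceS]

lemma cV_zero : cV l (⟨0, by omega⟩ : Fin k) = hubV l hk := rfl

lemma fsucc_last : fsucc (⟨k-1, by omega⟩ : Fin k) = ⟨0, by omega⟩ := by
  simp only [fsucc, Fin.mk.injEq]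
  have h1 : k - 1 + 1 = k := by omega
  rw [h1, Nat.mod_self]

section Reach

variable (A : Set (V1 k l))

lemma ind_adj {x y : V1 k l} (hx : x ∈ A) (hy : y ∈ A) (h : (SG k l).Adj x y) :
    ((SG k l).induce A).Adj ⟨x, hx⟩ ⟨y, hy⟩ := h

lemma reach_fwd (hhub : hubV l hk ∈ A) :
    ∀ (j : ℕ) (hj : j < k)
      (hc : ∀ m (hm : m < k), 0 < m → m ≤ j → cV l ⟨m, hm⟩ ∈ A)
      (hs : ∀ m (hm : m < k), m < j → sV l hk ⟨m, hm⟩ ∈ A)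
      (hcj : cV l ⟨j, hj⟩ ∈ A),
      ((SG k l).induce A).Reachable ⟨hubV l hk, hhub⟩ ⟨cV l ⟨j, hj⟩, hcj⟩ := by
  intro j
  induction j with
  | zero =>
    intro hj _ _ hcj
    have : (⟨hubV l hk, hhub⟩ : A) = ⟨cV l ⟨0, hj⟩, hcj⟩ := by
      apply Subtype.ext; rfl
    rw [this]
  | succ j ih =>
    intro hj hc hs hcj
    have hj' : j < k := by omega
    have hcj' : cV l ⟨j, hj'⟩ ∈ A := by
      rcases Nat.eq_zero_or_pos j with h0 | h0
      · subst h0; exact hhub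
      · exact hc j hj' h0 (by omega)
    have hsj : sV l hk ⟨j, hj'⟩ ∈ A := hs j hj' (by omega)
    have r1 := ih hj' (fun m hm h1 h2 => hc m hm h1 (by omega))
      (fun m hm h1 => hs m hm (by omega)) hcj'
    have a1 : (SG k l).Adj (cV l ⟨j, hj'⟩) (sV l hk ⟨j, hj'⟩) := adj_c_s hk _
    have a2 : (SG k l).Adj (sV l hk ⟨j, hj'⟩) (cV l ⟨j+1, hj⟩) := by
      have : fsucc (⟨j, hj'⟩ : Fin k) = ⟨j+1, hj⟩ := by
        simp only [fsucc, Fin.mk.injEq]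
        exact Nat.mod_eq_of_lt hj
      rw [← this]
      exact adj_s_c' hk _
    exact r1.trans ((ind_adj A hcj' hsj a1).reachable.trans (ind_adj A hsj hcj a2).reachable)

lemma reach_bwd (hhub : hubV l hk ∈ A) :
    ∀ (d j : ℕ) (hj0 : 0 < j) (hj : j < k) (hd : k - 1 - j = d)
      (hc : ∀ m (hm : m < k), j ≤ m → cV l ⟨m, hm⟩ ∈ A)
      (hs : ∀ m (hm : m < k), j ≤ m → sV l hk ⟨m, hm⟩ ∈ A)
      (hcj : cV l ⟨j, hj⟩ ∈ A),
      ((SG k l).induce A).Reachable ⟨hubV l hk, hhub⟩ ⟨cV l ⟨j, hj⟩, hcj⟩ := by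
  intro d
  induction d with
  | zero =>
    intro j hj0 hj hd hc hs hcj
    have hjval : j = k - 1 := by omega
    subst hjval
    have hsl : sV l hk ⟨k-1, hj⟩ ∈ A := hs (k-1) hj le_rfl
    have a1 : (SG k l).Adj (hubV l hk) (sV l hk ⟨k-1, hj⟩) := by
      have : cV l (fsucc (⟨k-1, hj⟩ : Fin k)) = hubV l hk := by
        rw [fsucc_last hk]; rfl
      have h2 := adj_s_c' (l := l) hk (⟨k-1, hj⟩ : Fin k)
      rw [this] at h2
      exact h2.symm
    have a2 : (SG k l).Adj (sV l hk ⟨k-1, hj⟩) (cV l ⟨k-1, hj⟩) := (adj_c_s hk _).symm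
    exact (ind_adj A hhub hsl a1).reachable.trans (ind_adj A hsl hcj a2).reachable
  | succ d ih =>
    intro j hj0 hj hd hc hs hcj
    have hj1 : j + 1 < k := by omega
    have hcj1 : cV l ⟨j+1, hj1⟩ ∈ A := hc (j+1) hj1 (by omega)
    have r1 := ih (j+1) (by omega) hj1 (by omega)
      (fun m hm h1 => hc m hm (by omega)) (fun m hm h1 => hs m hm (by omega)) hcj1
    have hsj : sV l hk ⟨j, by omega⟩ ∈ A := hs j (by omega) le_rfl
    have a2 : (SG k l).Adj (cV l ⟨j+1, hj1⟩) (sV l hk ⟨j, by omega⟩) := by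
      have : fsucc (⟨j, by omega⟩ : Fin k) = ⟨j+1, hj1⟩ := by
        simp only [fsucc, Fin.mk.injEq]
        exact Nat.mod_eq_of_lt hj1
      have h2 := adj_s_c' (l := l) hk (⟨j, by omega⟩ : Fin k)
      rw [this] at h2
      exact h2.symm
    have a3 : (SG k l).Adj (sV l hk ⟨j, by omega⟩) (cV l ⟨j, hj⟩) := (adj_c_s hk _).symm
    exact r1.trans ((ind_adj A hcj1 hsj a2).reachable.trans (ind_adj A hsj hcj a3).reachable)

lemma conn_of_reach_hub (hhub : hubV l hk ∈ A)
    (h : ∀ x (hx : x ∈ A), ((SG k l).induce A).Reachable ⟨x, hx⟩ ⟨hubV l hk, hhub⟩) :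
    ((SG k l).induce A).Connected := by
  rw [SimpleGraph.connected_iff_exists_forall_reachable]
  exact ⟨⟨hubV l hk, hhub⟩, fun w => (h w.1 w.2).symm⟩

end Reach

lemma closed_of_reach {W : Type*} (G : SimpleGraph W) (P : W → Prop)
    (hcl : ∀ x y, G.Adj x y → P x → P y) {u v : W} (h : G.Reachable u v) (hu : P u) : P v := by
  obtain ⟨w⟩ := h
  induction w with
  | nil => exact hu
  | cons h p ih => exact ih (hcl _ _ h hu)

end CS3

namespace CS4
open CS CS2 CS3

variable {k l : ℕ}

lemma sV_mem_ne_c (hk : 3 ≤ k) (i i₀ : Fin k) : sV l hk i ≠ cV l i₀ := by simp [sV, cV]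
lemma tV_ne_c (hk : 3 ≤ k) (a : Fin l) (i₀ : Fin k) : tV hk a ≠ cV l i₀ := by simp [tV, cV]
lemma leafV_ne_c (a : Fin l) (i₀ : Fin k) : leafV a ≠ cV l i₀ := by simp [leafV, cV]
lemma cV_ne_cV {i j : Fin k} (h : i ≠ j) : cV l i ≠ cV l j := by simp [cV, h]
lemma hubV_ne_cV (hk : 3 ≤ k) (i₀ : Fin k) (h : i₀.val ≠ 0) : hubV l hk ≠ cV l i₀ := by
  simp only [hubV, cV, Ne, Sum.inl.injEq]
  intro hh
  exact h (by rw [← hh]; rfl)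
lemma sV_inj (hk : 3 ≤ k) {i j : Fin k} (h : sV l hk i = sV l hk j) : i = j := by
  rw [sV, sV] at h
  have h2 : ceE l hk i = ceE l hk j := Sum.inr.inj h
  exact ceS_inj hk (congrArg Subtype.val h2)

lemma adj_inl (hk : 3 ≤ k) {v : Fin k ⊕ Fin l} {y : V1 k l} (h : (SG k l).Adj (.inl v) y) :
    ∃ e : (cycleStar k l).edgeSet, y = .inr e ∧ v ∈ (e : Sym2 (Fin k ⊕ Fin l)) := by
  match y with
  | Sum.inl w => exact absurd h (SG_not_adj_ll v w)
  | Sum.inr e => exact ⟨e, rfl, h⟩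

lemma adj_inr (hk : 3 ≤ k) {e : (cycleStar k l).edgeSet} {y : V1 k l} (h : (SG k l).Adj (.inr e) y) :
    ∃ v, y = .inl v ∧ v ∈ (e : Sym2 (Fin k ⊕ Fin l)) := by
  match y with
  | Sum.inl w => exact ⟨w, rfl, h⟩
  | Sum.inr f => exact absurd h (SG_not_adj_rr e f)

lemma edge_of_leaf_mem (hk : 3 ≤ k) {a : Fin l} {e : (cycleStar k l).edgeSet}
    (h : (Sum.inr a : Fin k ⊕ Fin l) ∈ (e : Sym2 (Fin k ⊕ Fin l))) : e = peE hk a := by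
  obtain ⟨i, hi⟩ | ⟨b, hb'⟩ := (edge_char hk e.1).mp e.2
  · rw [hi, mem_ceS] at h
    rcases h with h | h <;> simp at h
  · rw [hb', mem_peS] at h
    rcases h with h | h
    · simp at h
    · have hab : a = b := Sum.inr.inj h
      subst hab
      exact Subtype.ext (by rw [hb']; rfl)

-- the "claimC": reach any cycle vertex with index ≠ m₀ avoiding cV-index m₀ (or nothing if m₀ out of range is irrelevant)
section Avoid

variable (A : Set (V1 k l))

lemma reach_c_of_ne (hk : 3 ≤ k) (hhub : hubV l hk ∈ A)
    (hAs : ∀ i : Fin k, sV l hk i ∈ A)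
    (m₀ : ℕ) (hAc : ∀ m (hm : m < k), m ≠ m₀ → cV l ⟨m, hm⟩ ∈ A)
    (j : ℕ) (hj : j < k) (hne : j ≠ m₀) (hcj : cV l ⟨j, hj⟩ ∈ A) :
    ((SG k l).induce A).Reachable ⟨hubV l hk, hhub⟩ ⟨cV l ⟨j, hj⟩, hcj⟩ := by
  rcases Nat.lt_or_ge j m₀ with hlt | hge
  · exact reach_fwd hk A hhub j hj
      (fun m hm h1 h2 => hAc m hm (by omega)) (fun m hm _ => hAs _) hcj
  · rcases Nat.eq_zero_or_pos j with h0 | h0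
    · subst h0
      have : (⟨hubV l hk, hhub⟩ : A) = ⟨cV l ⟨0, hj⟩, hcj⟩ := by apply Subtype.ext; rfl
      rw [this]
    · exact reach_bwd hk A hhub (k - 1 - j) j h0 hj rfl
        (fun m hm h1 => hAc m hm (by omega)) (fun m hm _ => hAs _) hcj

end Avoid

/-- removal of a non-hub cycle vertex keeps the graph connected -/
lemma connA (hk : 3 ≤ k) (i₀ : Fin k) (hi₀ : i₀.val ≠ 0) :
    ((SG k l).induce {u | u ≠ cV l i₀}).Connected := by
  set A : Set (V1 k l) := {u | u ≠ cV l i₀} with hA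
  have hhub : hubV l hk ∈ A := hubV_ne_cV hk i₀ hi₀
  have hAs : ∀ i : Fin k, sV l hk i ∈ A := fun i => sV_mem_ne_c hk i i₀
  have hAc : ∀ m (hm : m < k), m ≠ i₀.val → cV l ⟨m, hm⟩ ∈ A := fun m hm h =>
    cV_ne_cV (by simp [Fin.ext_iff, h])
  have claim : ∀ (j : Fin k) (hne : j ≠ i₀) (hcj : cV l j ∈ A),
      ((SG k l).induce A).Reachable ⟨hubV l hk, hhub⟩ ⟨cV l j, hcj⟩ := by
    intro j hne hcj
    exact reach_c_of_ne A hk hhub hAs i₀.val hAc j.1 j.2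
      (by simpa [Fin.ext_iff] using hne) hcj
  apply conn_of_reach_hub hk A hhub
  rintro (⟨i | a⟩ | e) hx
  · -- cycle vertex
    have hne : i ≠ i₀ := fun h => hx (by rw [h]; rfl)
    exact (claim i hne hx).symm
  · -- leaf
    have ht : tV hk a ∈ A := tV_ne_c hk a i₀
    exact ((ind_adj A ht hx (adj_t_leaf hk a)).reachable.symm).trans
      ((ind_adj A hhub ht (adj_hub_t hk a)).reachable).symm
  · -- subdivision vertex
    obtain ⟨i, hi⟩ | ⟨a, ha⟩ := (edge_char hk e.1).mp e.2
    · have he : e = ceE l hk i := Subtype.ext hi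
      subst he
      by_cases hii : i = i₀
      · subst hii
        have hfs : fsucc i ≠ i := fsucc_ne i (by omega)
        have hcf : cV l (fsucc i) ∈ A := cV_ne_cV hfs
        have := (claim (fsucc i) hfs hcf).trans
          (ind_adj A hcf hx (adj_s_c' hk i).symm).reachable
        exact this.symm
      · have hci : cV l i ∈ A := cV_ne_cV hii
        exact ((claim i hii hci).trans (ind_adj A hci hx (adj_c_s hk i)).reachable).symm
    · have he : e = peE hk a := Subtype.ext ha
      subst he
      exact (ind_adj A hhub hx (adj_hub_t hk a)).reachable.symm

/-- removal of a leaf keeps the graph connected -/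
lemma connB (hk : 3 ≤ k) (b : Fin l) :
    ((SG k l).induce {u | u ≠ leafV b}).Connected := by
  set A : Set (V1 k l) := {u | u ≠ leafV b} with hA
  have hhub : hubV l hk ∈ A := by simp [A, hubV, leafV]
  have hAs : ∀ i : Fin k, sV l hk i ∈ A := by intro i; simp [A, sV, leafV]
  have hAt : ∀ a : Fin l, tV hk a ∈ A := by intro a; simp [A, tV, leafV]
  have hAc : ∀ m (hm : m < k), m ≠ k → cV l ⟨m, hm⟩ ∈ A := by
    intro m hm _; simp [A, cV, leafV]
  have claim : ∀ (j : Fin k) (hcj : cV l j ∈ A),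
      ((SG k l).induce A).Reachable ⟨hubV l hk, hhub⟩ ⟨cV l j, hcj⟩ := by
    intro j hcj
    exact reach_c_of_ne A hk hhub hAs k hAc j.1 j.2 (by omega) hcj
  apply conn_of_reach_hub hk A hhub
  rintro (⟨i | a⟩ | e) hx
  · exact (claim i hx).symm
  · exact ((ind_adj A (hAt a) hx (adj_t_leaf hk a)).reachable.symm).trans
      ((ind_adj A hhub (hAt a) (adj_hub_t hk a)).reachable).symm
  · obtain ⟨i, hi⟩ | ⟨a, ha⟩ := (edge_char hk e.1).mp e.2
    · have he : e = ceE l hk i := Subtype.ext hi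
      subst he
      have hci : cV l i ∈ A := by simp [A, cV, leafV]
      exact ((claim i hci).trans (ind_adj A hci hx (adj_c_s hk i)).reachable).symm
    · have he : e = peE hk a := Subtype.ext ha
      subst he
      exact (ind_adj A hhub hx (adj_hub_t hk a)).reachable.symm

/-- removal of a cycle subdivision vertex keeps the graph connected -/
lemma connC (hk : 3 ≤ k) (i₀ : Fin k) :
    ((SG k l).induce {u | u ≠ sV l hk i₀}).Connected := by
  set A : Set (V1 k l) := {u | u ≠ sV l hk i₀} with hA
  have hhub : hubV l hk ∈ A := by simp [A, hubV, sV]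
  have hAt : ∀ a : Fin l, tV hk a ∈ A := by
    intro a
    simp only [A, tV, sV, Set.mem_setOf_eq, Ne, Sum.inr.injEq]
    intro h
    exact (ceS_ne_peS i₀ (kpos hk) a) (congrArg Subtype.val h).symm
  have hAc : ∀ i : Fin k, cV l i ∈ A := by intro i; simp [A, cV, sV]
  have hAleaf : ∀ a : Fin l, leafV a ∈ A := by intro a; simp [A, leafV, sV]
  have claim : ∀ (j : Fin k) (hcj : cV l j ∈ A),
      ((SG k l).induce A).Reachable ⟨hubV l hk, hhub⟩ ⟨cV l j, hcj⟩ := by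
    intro j hcj
    have h1 : (⟨j.1, j.2⟩ : Fin k) = j := rfl
    rcases Nat.lt_or_ge j.1 (i₀.1 + 1) with hlt | hge
    · have := reach_fwd hk A hhub j.1 j.2 (fun m hm _ _ => hAc _)
        (fun m hm hmj => by
          simp only [A, sV, Set.mem_setOf_eq, Ne, Sum.inr.injEq]
          intro h
          have : (⟨m, hm⟩ : Fin k) = i₀ := by
            apply ceS_inj (l := l) hk
            exact congrArg Subtype.val h
          have : m = i₀.1 := by rw [← this]
          omega) (h1 ▸ hcj)
      simpa [h1] using this
    · have h0 : 0 < j.1 := by omega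
      have := reach_bwd hk A hhub (k - 1 - j.1) j.1 h0 j.2 rfl
        (fun m hm _ => hAc _)
        (fun m hm hmj => by
          simp only [A, sV, Set.mem_setOf_eq, Ne, Sum.inr.injEq]
          intro h
          have : (⟨m, hm⟩ : Fin k) = i₀ := by
            apply ceS_inj (l := l) hk
            exact congrArg Subtype.val h
          have : m = i₀.1 := by rw [← this]
          omega) (h1 ▸ hcj)
      simpa [h1] using this
  apply conn_of_reach_hub hk A hhub
  rintro (⟨i | a⟩ | e) hx
  · exact (claim i (hAc i)).symm
  · exact ((ind_adj A (hAt a) hx (adj_t_leaf hk a)).reachable.symm).trans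
      ((ind_adj A hhub (hAt a) (adj_hub_t hk a)).reachable).symm
  · obtain ⟨i, hi⟩ | ⟨a, ha⟩ := (edge_char hk e.1).mp e.2
    · have he : e = ceE l hk i := Subtype.ext hi
      subst he
      exact ((claim i (hAc i)).trans (ind_adj A (hAc i) hx (adj_c_s hk i)).reachable).symm
    · have he : e = peE hk a := Subtype.ext ha
      subst he
      exact (ind_adj A hhub hx (adj_hub_t hk a)).reachable.symm

/-- the subdivision graph is connected -/
lemma connS (hk : 3 ≤ k) : (SG k l).Connected := by
  rw [← (SimpleGraph.induceUnivIso (SG k l)).connected_iff]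
  set A : Set (V1 k l) := Set.univ with hA
  have hhub : hubV l hk ∈ A := (Set.mem_univ _)
  have hAc : ∀ m (hm : m < k), m ≠ k → cV l ⟨m, hm⟩ ∈ A := fun _ _ _ => (Set.mem_univ _)
  have claim : ∀ (j : Fin k) (hcj : cV l j ∈ A),
      ((SG k l).induce A).Reachable ⟨hubV l hk, hhub⟩ ⟨cV l j, hcj⟩ := by
    intro j hcj
    exact reach_c_of_ne A hk hhub (fun _ => (Set.mem_univ _)) k hAc j.1 j.2 (by omega) hcj
  apply conn_of_reach_hub hk A hhub
  rintro (⟨i | a⟩ | e) hx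
  · exact (claim i (Set.mem_univ _)).symm
  · exact ((ind_adj A (Set.mem_univ _) hx (adj_t_leaf hk a)).reachable.symm).trans
      ((ind_adj A hhub (Set.mem_univ _) (adj_hub_t hk a)).reachable).symm
  · obtain ⟨i, hi⟩ | ⟨a, ha⟩ := (edge_char hk e.1).mp e.2
    · have he : e = ceE l hk i := Subtype.ext hi
      subst he
      exact ((claim i (Set.mem_univ _)).trans (ind_adj A (Set.mem_univ _) hx (adj_c_s hk i)).reachable).symm
    · have he : e = peE hk a := Subtype.ext ha
      subst he
      exact (ind_adj A hhub hx (adj_hub_t hk a)).reachable.symm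

end CS4

namespace CS5
open CS CS2 CS3 CS4

variable {k l : ℕ}

lemma not_conn_hub (hk : 3 ≤ k) (hl : 0 < l) :
    ¬ ((SG k l).induce {u | u ≠ hubV l hk}).Connected := by
  intro h
  set A : Set (V1 k l) := {u | u ≠ hubV l hk} with hA
  set a₀ : Fin l := ⟨0, hl⟩ with ha₀
  have hleaf : leafV a₀ ∈ A := by simp [A, leafV, hubV]
  have hc1 : cV l ⟨1, by omega⟩ ∈ A := by
    simp only [A, cV, hubV, hb, Set.mem_setOf_eq, Ne, Sum.inl.injEq]
    simp [Fin.ext_iff]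
  have hr : ((SG k l).induce A).Reachable ⟨leafV a₀, hleaf⟩ ⟨cV l ⟨1, by omega⟩, hc1⟩ :=
    h.preconnected _ _
  have key := closed_of_reach ((SG k l).induce A)
    (fun x => x.1 = leafV a₀ ∨ x.1 = tV hk a₀) ?_ hr (Or.inl rfl)
  · rcases key with h1 | h1
    · simp [cV, leafV] at h1
    · simp [cV, tV] at h1
  · rintro ⟨x, hxA⟩ ⟨y, hyA⟩ hadj hP
    have hadj' : (SG k l).Adj x y := hadj
    rcases hP with h1 | h1
    · rw [show x = leafV a₀ from h1] at hadj'
      obtain ⟨e, rfl, hmem⟩ := adj_inl hk hadj'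
      right
      show Sum.inr e = tV hk a₀
      rw [tV, edge_of_leaf_mem hk hmem]
    · rw [show x = tV hk a₀ from h1] at hadj'
      obtain ⟨v, rfl, hmem⟩ := adj_inr hk hadj'
      rcases (mem_peS (kpos hk) v a₀).mp hmem with rfl | rfl
      · exact absurd rfl hyA
      · left; rfl

lemma not_conn_t (hk : 3 ≤ k) (b : Fin l) :
    ¬ ((SG k l).induce {u | u ≠ tV hk b}).Connected := by
  intro h
  set A : Set (V1 k l) := {u | u ≠ tV hk b} with hA
  have hleaf : leafV b ∈ A := by simp [A, leafV, tV]
  have hhub : hubV l hk ∈ A := by simp [A, hubV, tV]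
  have hr : ((SG k l).induce A).Reachable ⟨leafV b, hleaf⟩ ⟨hubV l hk, hhub⟩ :=
    h.preconnected _ _
  have key := closed_of_reach ((SG k l).induce A)
    (fun x => x.1 = leafV b) ?_ hr rfl
  · simp [hubV, leafV] at key
  · rintro ⟨x, hxA⟩ ⟨y, hyA⟩ hadj hP
    have hadj' : (SG k l).Adj x y := hadj
    rw [show x = leafV b from hP] at hadj'
    obtain ⟨e, rfl, hmem⟩ := adj_inl hk hadj'
    exact absurd (show Sum.inr e = tV hk b by rw [tV, edge_of_leaf_mem hk hmem]) hyA

lemma isCut_iff (hk : 3 ≤ k) (hl : 0 < l) (v : V1 k l) :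
    IsCutVertex (SG k l) v ↔ v = hubV l hk ∨ ∃ a, v = tV hk a := by
  constructor
  · rintro ⟨hc, hnc⟩
    by_contra hno
    push_neg at hno
    obtain ⟨h1, h2⟩ := hno
    rcases v with (⟨i | a⟩ | e)
    · by_cases h0 : i.val = 0
      · refine h1 ?_
        have : i = hb (kpos hk) := Fin.ext h0
        rw [hubV, this]
      · exact hnc (connA hk i h0)
    · exact hnc (connB hk a)
    · obtain ⟨i, hi⟩ | ⟨a, ha⟩ := (edge_char hk e.1).mp e.2
      · have he : e = ceE l hk i := Subtype.ext hi
        subst he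
        exact hnc (connC hk i)
      · have he : e = peE hk a := Subtype.ext ha
        exact h2 a (by rw [tV, he])
  · rintro (rfl | ⟨a, rfl⟩)
    · exact ⟨connS hk, not_conn_hub hk hl⟩
    · exact ⟨connS hk, not_conn_t hk a⟩

end CS5

namespace CS6
open CS CS2 CS3 CS4 CS5

variable {k l : ℕ}

abbrev CP (l : ℕ) := Fin l ⊕ Unit

abbrev LG (k l : ℕ) := lineCutGraph (SG k l)

def GC (hk : 3 ≤ k) (hl : 0 < l) : CP l → {v : V1 k l // IsCutVertex (SG k l) v}
  | .inl a => ⟨tV hk a, (isCut_iff hk hl _).mpr (Or.inr ⟨a, rfl⟩)⟩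
  | .inr _ => ⟨hubV l hk, (isCut_iff hk hl _).mpr (Or.inl rfl)⟩

lemma GC_bij (hk : 3 ≤ k) (hl : 0 < l) : Function.Bijective (GC hk hl) := by
  constructor
  · rintro (a | u) (b | w) h
    · simp only [GC, Subtype.mk.injEq, tV, Sum.inr.injEq] at h
      have : peS (kpos hk) a = peS (kpos hk) b := congrArg Subtype.val h
      rw [peS_inj _ this]
    · exact absurd (congrArg Subtype.val h) (by simp [GC, tV, hubV])
    · exact absurd (congrArg Subtype.val h) (by simp [GC, tV, hubV])
    · rfl
  · rintro ⟨v, hv⟩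
    rcases (isCut_iff hk hl v).mp hv with rfl | ⟨a, rfl⟩
    · exact ⟨.inr (), rfl⟩
    · exact ⟨.inl a, rfl⟩

def Ψ (hk : 3 ≤ k) (hl : 0 < l) :
    (EP k l ⊕ CP l) ≃ ((SG k l).edgeSet ⊕ {v : V1 k l // IsCutVertex (SG k l) v}) :=
  Equiv.sumCongr (Equiv.ofBijective (FE hk) ⟨FE_inj hk, FE_surj hk⟩)
    (Equiv.ofBijective (GC hk hl) (GC_bij hk hl))

lemma Psi_inl (hk : 3 ≤ k) (hl : 0 < l) (p : EP k l) :
    Ψ hk hl (.inl p) = .inl (FE hk p) := rfl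

lemma Psi_inr (hk : 3 ≤ k) (hl : 0 < l) (c : CP l) :
    Ψ hk hl (.inr c) = .inr (GC hk hl c) := rfl

lemma adj_ll (hk : 3 ≤ k) (hl : 0 < l) (p q : EP k l) :
    (LG k l).Adj (Ψ hk hl (.inl p)) (Ψ hk hl (.inl q)) ↔
      q ≠ p ∧ (Fv hk q = Fv hk p ∨ Fe l hk q = Fe l hk p) := by
  rw [Psi_inl, Psi_inl]
  show (FE hk p ≠ FE hk q ∧ ∃ v, v ∈ F hk p ∧ v ∈ F hk q) ↔ _
  constructor
  · rintro ⟨hne, v, hv1, hv2⟩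
    refine ⟨fun h => hne (congrArg _ h.symm), ?_⟩
    rw [F, Sym2.mem_iff] at hv1 hv2
    rcases hv1 with rfl | rfl <;> rcases hv2 with h | h
    · exact Or.inl (Sum.inl.inj h).symm
    · exact absurd h (by simp)
    · exact absurd h.symm (by simp)
    · exact Or.inr (Sum.inr.inj h).symm
  · rintro ⟨hne, hvv | hee⟩
    · refine ⟨fun h => hne (FE_inj hk h).symm, Sum.inl (Fv hk p), ?_, ?_⟩
      · rw [F, Sym2.mem_iff]; left; rfl
      · rw [F, Sym2.mem_iff]; left; rw [hvv]
    · refine ⟨fun h => hne (FE_inj hk h).symm, Sum.inr (Fe l hk p), ?_, ?_⟩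
      · rw [F, Sym2.mem_iff]; right; rfl
      · rw [F, Sym2.mem_iff]; right; rw [hee]

lemma adj_lt (hk : 3 ≤ k) (hl : 0 < l) (p : EP k l) (a : Fin l) :
    (LG k l).Adj (Ψ hk hl (.inl p)) (Ψ hk hl (.inr (.inl a))) ↔ Fe l hk p = peE hk a := by
  rw [Psi_inl, Psi_inr]
  show (tV hk a : V1 k l) ∈ F hk p ↔ _
  rw [F, Sym2.mem_iff, tV]
  constructor
  · rintro (h | h)
    · exact absurd h (by simp)
    · exact (Sum.inr.inj h).symm
  · intro h; right; rw [h]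

lemma adj_lh (hk : 3 ≤ k) (hl : 0 < l) (p : EP k l) (u : Unit) :
    (LG k l).Adj (Ψ hk hl (.inl p)) (Ψ hk hl (.inr (.inr u))) ↔
      Fv hk p = Sum.inl (hb (kpos hk)) := by
  rw [Psi_inl, Psi_inr]
  show (hubV l hk : V1 k l) ∈ F hk p ↔ _
  rw [F, Sym2.mem_iff, hubV]
  constructor
  · rintro (h | h)
    · exact (Sum.inl.inj h).symm
    · exact absurd h (by simp)
  · intro h; left; rw [h]

lemma adj_rr (hk : 3 ≤ k) (hl : 0 < l) (c d : CP l) :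
    ¬ (LG k l).Adj (Ψ hk hl (.inr c)) (Ψ hk hl (.inr d)) := fun h => h

lemma degree_filter {W : Type*} [Fintype W] (G : SimpleGraph W) (v : W) :
    G.degree v = ∑ u, if G.Adj v u then 1 else 0 := by
  classical
  rw [← SimpleGraph.card_neighborFinset_eq_degree, SimpleGraph.neighborFinset_eq_filter,
    Finset.card_filter]

-- counting lemmas
lemma fsucc_bij (hk : 3 ≤ k) : Function.Bijective (fsucc (k := k)) := by
  rw [Function.Bijective]
  have hinj : Function.Injective (fsucc (k := k)) := by
    intro a b h
    have h' : (a.1+1) % k = (b.1+1) % k := congrArg Fin.val h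
    have ha := a.2; have hb := b.2
    apply Fin.ext
    rcases Nat.lt_or_ge (a.1+1) k with h1 | h1 <;> rcases Nat.lt_or_ge (b.1+1) k with h2 | h2
    · rw [Nat.mod_eq_of_lt h1, Nat.mod_eq_of_lt h2] at h'; omega
    · have hb' : b.1+1 = k := by omega
      rw [Nat.mod_eq_of_lt h1, hb', Nat.mod_self] at h'; omega
    · have ha' : a.1+1 = k := by omega
      rw [ha', Nat.mod_self, Nat.mod_eq_of_lt h2] at h'; omega
    · omega
  exact ⟨hinj, Finite.surjective_of_injective hinj⟩

lemma sum_ite_eq_one {n : ℕ} (i₀ : Fin n) : ∑ i : Fin n, (if i = i₀ then 1 else 0) = 1 := by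
  simp [Finset.sum_ite_eq']

lemma sum_fsucc_eq_one (hk : 3 ≤ k) (i₀ : Fin k) :
    ∑ i : Fin k, (if fsucc i = i₀ then 1 else 0) = 1 := by
  rw [(fsucc_bij hk).sum_comp (fun j => if j = i₀ then 1 else 0)]
  exact sum_ite_eq_one i₀

lemma NV_hub (hk : 3 ≤ k) :
    ∑ q : EP k l, (if Fv hk q = Sum.inl (hb (kpos hk)) then 1 else 0) = l + 2 := by
  rw [Fintype.sum_prod_type, Fintype.sum_sum_type]
  have h1 : ∀ i : Fin k, (∑ b : Bool, if Fv hk ((Sum.inl i : Fin k ⊕ Fin l), b) = Sum.inl (hb (kpos hk)) then 1 else 0)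
      = (if fsucc i = hb (kpos hk) then 1 else 0) + (if i = hb (kpos hk) then 1 else 0) := by
    intro i
    rw [Fintype.sum_bool]
    congr 1
    · simp [Fv]
    · simp [Fv]
  have h2 : ∀ a : Fin l, (∑ b : Bool, if Fv hk ((Sum.inr a : Fin k ⊕ Fin l), b) = Sum.inl (hb (kpos hk)) then 1 else 0) = 1 := by
    intro a
    rw [Fintype.sum_bool]
    simp [Fv]
  rw [Finset.sum_congr rfl (fun i _ => h1 i), Finset.sum_congr rfl (fun a _ => h2 a)]
  rw [Finset.sum_add_distrib, sum_fsucc_eq_one hk, sum_ite_eq_one]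
  simp
  omega

lemma NV_c (hk : 3 ≤ k) (i₀ : Fin k) (hi₀ : i₀.1 ≠ 0) :
    ∑ q : EP k l, (if Fv hk q = Sum.inl i₀ then 1 else 0) = 2 := by
  rw [Fintype.sum_prod_type, Fintype.sum_sum_type]
  have h1 : ∀ i : Fin k, (∑ b : Bool, if Fv hk ((Sum.inl i : Fin k ⊕ Fin l), b) = Sum.inl i₀ then 1 else 0)
      = (if fsucc i = i₀ then 1 else 0) + (if i = i₀ then 1 else 0) := by
    intro i
    rw [Fintype.sum_bool]
    congr 1
    · simp [Fv]
    · simp [Fv]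
  have h2 : ∀ a : Fin l, (∑ b : Bool, if Fv hk ((Sum.inr a : Fin k ⊕ Fin l), b) = Sum.inl i₀ then 1 else 0) = 0 := by
    intro a
    rw [Fintype.sum_bool]
    have : hb (kpos hk) ≠ i₀ := by
      intro h; exact hi₀ (by rw [← h]; rfl)
    simp [Fv, this]
  rw [Finset.sum_congr rfl (fun i _ => h1 i), Finset.sum_congr rfl (fun a _ => h2 a)]
  rw [Finset.sum_add_distrib, sum_fsucc_eq_one hk, sum_ite_eq_one]
  simp

lemma NV_leaf (hk : 3 ≤ k) (a₀ : Fin l) :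
    ∑ q : EP k l, (if Fv hk q = Sum.inr a₀ then 1 else 0) = 1 := by
  rw [Fintype.sum_prod_type, Fintype.sum_sum_type]
  have h1 : ∀ i : Fin k, (∑ b : Bool, if Fv hk ((Sum.inl i : Fin k ⊕ Fin l), b) = Sum.inr a₀ then 1 else 0) = 0 := by
    intro i; rw [Fintype.sum_bool]; simp [Fv]
  have h2 : ∀ a : Fin l, (∑ b : Bool, if Fv hk ((Sum.inr a : Fin k ⊕ Fin l), b) = Sum.inr a₀ then 1 else 0)
      = (if a = a₀ then 1 else 0) := by
    intro a; rw [Fintype.sum_bool]; simp [Fv]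
  rw [Finset.sum_congr rfl (fun i _ => h1 i), Finset.sum_congr rfl (fun a _ => h2 a)]
  simp [Finset.sum_ite_eq']

lemma Fe_eq_iff (hk : 3 ≤ k) (p q : EP k l) : Fe l hk q = Fe l hk p ↔ q.1 = p.1 := by
  constructor
  · exact fun h => Fe_inj hk h
  · intro h
    rcases q with ⟨xq, bq⟩; rcases p with ⟨xp, bp⟩
    simp only at h
    subst h
    rcases xq with i | a <;> rfl

lemma cnt_same_edge (hk : 3 ≤ k) (p : EP k l) :
    ∑ q : EP k l, (if Fe l hk q = Fe l hk p then 1 else 0) = 2 := by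
  have h : ∀ q : EP k l, (if Fe l hk q = Fe l hk p then 1 else 0) = (if q.1 = p.1 then 1 else 0) := by
    intro q
    simp [Fe_eq_iff hk]
  rw [Finset.sum_congr rfl (fun q _ => h q), Fintype.sum_prod_type]
  have h2 : ∀ x : Fin k ⊕ Fin l, (∑ _b : Bool, if x = p.1 then (1:ℕ) else 0) = if x = p.1 then 2 else 0 := by
    intro x
    rw [Fintype.sum_bool]
    by_cases hx : x = p.1 <;> simp [hx]
  rw [Finset.sum_congr rfl (fun x _ => h2 x)]
  simp [Finset.sum_ite_eq']

lemma cnt_pe (hk : 3 ≤ k) (p : EP k l) (hp : ∃ a, p.1 = Sum.inr a) :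
    ∑ a : Fin l, (if Fe l hk p = peE hk a then 1 else 0) = 1 := by
  obtain ⟨a₀, ha₀⟩ := hp
  have h : ∀ a : Fin l, (Fe l hk p = peE hk a) ↔ a = a₀ := by
    intro a
    rcases p with ⟨x, b⟩
    simp only at ha₀
    subst ha₀
    constructor
    · intro h
      have : peS (kpos hk) a₀ = peS (kpos hk) a := congrArg Subtype.val h
      exact (peS_inj _ this).symm
    · rintro rfl; rfl
  simp only [h]
  exact sum_ite_eq_one a₀

lemma cnt_ce (hk : 3 ≤ k) (p : EP k l) (hp : ∃ i, p.1 = Sum.inl i) :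
    ∑ a : Fin l, (if Fe l hk p = peE hk a then 1 else 0) = 0 := by
  obtain ⟨i₀, hi₀⟩ := hp
  have h : ∀ a : Fin l, ¬ (Fe l hk p = peE hk a) := by
    intro a h
    rcases p with ⟨x, b⟩
    simp only at hi₀
    subst hi₀
    exact (ceS_ne_peS i₀ (kpos hk) a) (congrArg Subtype.val h)
  simp [h]

lemma cntE (hk : 3 ≤ k) (p : EP k l) :
    (∑ q : EP k l, if (q ≠ p ∧ (Fv hk q = Fv hk p ∨ Fe l hk q = Fe l hk p)) then 1 else 0) + 2
      = (∑ q : EP k l, if Fv hk q = Fv hk p then 1 else 0)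
        + (∑ q : EP k l, if Fe l hk q = Fe l hk p then 1 else 0) := by
  have key : ∀ q : EP k l,
      (if (q ≠ p ∧ (Fv hk q = Fv hk p ∨ Fe l hk q = Fe l hk p)) then 1 else 0)
        + ((if q = p then 1 else 0) + (if q = p then 1 else 0))
      = (if Fv hk q = Fv hk p then 1 else 0) + (if Fe l hk q = Fe l hk p then 1 else 0) := by
    intro q
    by_cases hq : q = p
    · subst hq; simp
    · by_cases hX : Fv hk q = Fv hk p <;> by_cases hY : Fe l hk q = Fe l hk p
      · exfalso
        apply hq
        apply FE_inj hk
        apply Subtype.ext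
        rw [FE, FE]
        show F hk q = F hk p
        rw [F, F, hX, hY]
      all_goals simp [hq, hX, hY]
  calc (∑ q : EP k l, if (q ≠ p ∧ (Fv hk q = Fv hk p ∨ Fe l hk q = Fe l hk p)) then 1 else 0) + 2
      = ∑ q : EP k l, ((if (q ≠ p ∧ (Fv hk q = Fv hk p ∨ Fe l hk q = Fe l hk p)) then 1 else 0)
          + ((if q = p then 1 else 0) + (if q = p then 1 else 0))) := by
        rw [Finset.sum_add_distrib, Finset.sum_add_distrib]
        have : (∑ q : EP k l, if q = p then 1 else 0) = 1 := by simp [Finset.sum_ite_eq']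
        rw [this]
    _ = _ := by
        rw [Finset.sum_congr rfl (fun q _ => key q), Finset.sum_add_distrib]

-- degree of an edge vertex
lemma deg_inl (hk : 3 ≤ k) (hl : 0 < l) (p : EP k l) :
    (LG k l).degree (Ψ hk hl (.inl p)) + 2
      = (∑ q : EP k l, if Fv hk q = Fv hk p then 1 else 0)
        + (∑ q : EP k l, if Fe l hk q = Fe l hk p then 1 else 0)
        + ((∑ a : Fin l, if Fe l hk p = peE hk a then 1 else 0)
        + (if Fv hk p = Sum.inl (hb (kpos hk)) then 1 else 0)) := by
  rw [degree_filter]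
  rw [← (Ψ hk hl).sum_comp (fun u => if (LG k l).Adj (Ψ hk hl (.inl p)) u then (1:ℕ) else 0)]
  rw [Fintype.sum_sum_type]
  have e2 : (∑ c : CP l, if (LG k l).Adj (Ψ hk hl (.inl p)) (Ψ hk hl (.inr c)) then (1:ℕ) else 0)
      = (∑ a : Fin l, if Fe l hk p = peE hk a then 1 else 0)
        + (if Fv hk p = Sum.inl (hb (kpos hk)) then 1 else 0) := by
    rw [Fintype.sum_sum_type]
    congr 1
    · exact Finset.sum_congr rfl (fun a _ => by rw [if_congr (adj_lt hk hl p a) rfl rfl])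
    · have : ∀ u : Unit, (if (LG k l).Adj (Ψ hk hl (.inl p)) (Ψ hk hl (.inr (.inr u))) then (1:ℕ) else 0)
          = (if Fv hk p = Sum.inl (hb (kpos hk)) then 1 else 0) := by
        intro u
        rw [if_congr (adj_lh hk hl p u) rfl rfl]
      simp [this]
  have e1 : (∑ q : EP k l, if (LG k l).Adj (Ψ hk hl (.inl p)) (Ψ hk hl (.inl q)) then (1:ℕ) else 0)
      = ∑ q : EP k l, if (q ≠ p ∧ (Fv hk q = Fv hk p ∨ Fe l hk q = Fe l hk p)) then 1 else 0 :=
    Finset.sum_congr rfl (fun q _ => by rw [if_congr (adj_ll hk hl p q) rfl rfl])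
  rw [e1, e2]
  have := cntE hk p
  omega

lemma deg_t (hk : 3 ≤ k) (hl : 0 < l) (a : Fin l) :
    (LG k l).degree (Ψ hk hl (.inr (.inl a))) = 2 := by
  rw [degree_filter]
  rw [← (Ψ hk hl).sum_comp (fun u => if (LG k l).Adj (Ψ hk hl (.inr (.inl a))) u then (1:ℕ) else 0)]
  rw [Fintype.sum_sum_type]
  have e2 : (∑ c : CP l, if (LG k l).Adj (Ψ hk hl (.inr (.inl a))) (Ψ hk hl (.inr c)) then (1:ℕ) else 0) = 0 := by
    simp [adj_rr hk hl]
  have e1 : ∀ q : EP k l, ((LG k l).Adj (Ψ hk hl (.inr (.inl a))) (Ψ hk hl (.inl q))) ↔ Fe l hk q = peE hk a := by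
    intro q
    rw [(LG k l).adj_comm]
    exact adj_lt hk hl q a
  have h : (∑ q : EP k l, if (LG k l).Adj (Ψ hk hl (.inr (.inl a))) (Ψ hk hl (.inl q)) then (1:ℕ) else 0)
      = ∑ q : EP k l, if Fe l hk q = peE hk a then 1 else 0 :=
    Finset.sum_congr rfl (fun q _ => by rw [if_congr (e1 q) rfl rfl])
  rw [h, e2]
  have h2 := cnt_same_edge hk (((Sum.inr a : Fin k ⊕ Fin l), false) : EP k l)
  rw [show Fe l hk ((Sum.inr a : Fin k ⊕ Fin l), false) = peE hk a from rfl] at h2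
  omega

lemma deg_hub (hk : 3 ≤ k) (hl : 0 < l) (u : Unit) :
    (LG k l).degree (Ψ hk hl (.inr (.inr u))) = l + 2 := by
  rw [degree_filter]
  rw [← (Ψ hk hl).sum_comp (fun x => if (LG k l).Adj (Ψ hk hl (.inr (.inr u))) x then (1:ℕ) else 0)]
  rw [Fintype.sum_sum_type]
  have e2 : (∑ c : CP l, if (LG k l).Adj (Ψ hk hl (.inr (.inr u))) (Ψ hk hl (.inr c)) then (1:ℕ) else 0) = 0 := by
    simp [adj_rr hk hl]
  have e1 : ∀ q : EP k l, ((LG k l).Adj (Ψ hk hl (.inr (.inr u))) (Ψ hk hl (.inl q))) ↔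
      Fv hk q = Sum.inl (hb (kpos hk)) := by
    intro q
    rw [(LG k l).adj_comm]
    exact adj_lh hk hl q u
  have h : (∑ q : EP k l, if (LG k l).Adj (Ψ hk hl (.inr (.inr u))) (Ψ hk hl (.inl q)) then (1:ℕ) else 0)
      = ∑ q : EP k l, if Fv hk q = Sum.inl (hb (kpos hk)) then 1 else 0 :=
    Finset.sum_congr rfl (fun q _ => by rw [if_congr (e1 q) rfl rfl])
  rw [h, e2, NV_hub hk]

end CS6

namespace CS7
open CS CS2 CS3 CS4 CS5 CS6

variable {k l : ℕ}

lemma hb_iff (hk : 3 ≤ k) (i : Fin k) : i = hb (kpos hk) ↔ i.1 = 0 := by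
  constructor
  · rintro rfl; rfl
  · intro h; exact Fin.ext h

lemma deg_cf (hk : 3 ≤ k) (hl : 0 < l) (i : Fin k) :
    (LG k l).degree (Ψ hk hl (.inl ((Sum.inl i : Fin k ⊕ Fin l), false)))
      = if i = hb (kpos hk) then l + 3 else 2 := by
  have hd := deg_inl hk hl (((Sum.inl i : Fin k ⊕ Fin l), false) : EP k l)
  rw [cnt_same_edge hk] at hd
  rw [cnt_ce hk _ ⟨i, rfl⟩] at hd
  have hFv : Fv hk (((Sum.inl i : Fin k ⊕ Fin l), false) : EP k l) = Sum.inl i := rfl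
  rw [hFv] at hd
  by_cases hi : i = hb (kpos hk)
  · have hNV : (∑ q : EP k l, if Fv hk q = Sum.inl i then (1:ℕ) else 0) = l + 2 := by
      rw [hi]; exact NV_hub hk
    have hH : (if (Sum.inl i : Fin k ⊕ Fin l) = Sum.inl (hb (kpos hk)) then (1:ℕ) else 0) = 1 := by
      rw [hi]; simp
    rw [hNV, hH] at hd
    rw [if_pos hi]
    omega
  · have hNV : (∑ q : EP k l, if Fv hk q = Sum.inl i then (1:ℕ) else 0) = 2 :=
      NV_c hk i (fun h => hi (Fin.ext h))
    have hH : (if (Sum.inl i : Fin k ⊕ Fin l) = Sum.inl (hb (kpos hk)) then (1:ℕ) else 0) = 0 :=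
      if_neg (fun h => hi (Sum.inl.inj h))
    rw [hNV, hH] at hd
    rw [if_neg hi]
    omega

lemma deg_ct (hk : 3 ≤ k) (hl : 0 < l) (i : Fin k) :
    (LG k l).degree (Ψ hk hl (.inl ((Sum.inl i : Fin k ⊕ Fin l), true)))
      = if fsucc i = hb (kpos hk) then l + 3 else 2 := by
  have hd := deg_inl hk hl (((Sum.inl i : Fin k ⊕ Fin l), true) : EP k l)
  rw [cnt_same_edge hk] at hd
  rw [cnt_ce hk _ ⟨i, rfl⟩] at hd
  have hFv : Fv hk (((Sum.inl i : Fin k ⊕ Fin l), true) : EP k l) = Sum.inl (fsucc i) := rfl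
  rw [hFv] at hd
  by_cases hi : fsucc i = hb (kpos hk)
  · have hNV : (∑ q : EP k l, if Fv hk q = Sum.inl (fsucc i) then (1:ℕ) else 0) = l + 2 := by
      rw [hi]; exact NV_hub hk
    have hH : (if (Sum.inl (fsucc i) : Fin k ⊕ Fin l) = Sum.inl (hb (kpos hk)) then (1:ℕ) else 0) = 1 := by
      rw [hi]; simp
    rw [hNV, hH] at hd
    rw [if_pos hi]
    omega
  · have hNV : (∑ q : EP k l, if Fv hk q = Sum.inl (fsucc i) then (1:ℕ) else 0) = 2 :=
      NV_c hk (fsucc i) (fun h => hi (Fin.ext h))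
    have hH : (if (Sum.inl (fsucc i) : Fin k ⊕ Fin l) = Sum.inl (hb (kpos hk)) then (1:ℕ) else 0) = 0 :=
      if_neg (fun h => hi (Sum.inl.inj h))
    rw [hNV, hH] at hd
    rw [if_neg hi]
    omega

lemma deg_pf (hk : 3 ≤ k) (hl : 0 < l) (a : Fin l) :
    (LG k l).degree (Ψ hk hl (.inl ((Sum.inr a : Fin k ⊕ Fin l), false))) = l + 4 := by
  have hd := deg_inl hk hl (((Sum.inr a : Fin k ⊕ Fin l), false) : EP k l)
  rw [cnt_same_edge hk] at hd
  rw [cnt_pe hk _ ⟨a, rfl⟩] at hd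
  have hFv : Fv hk (((Sum.inr a : Fin k ⊕ Fin l), false) : EP k l) = Sum.inl (hb (kpos hk)) := rfl
  rw [hFv] at hd
  rw [NV_hub hk] at hd
  have hH : (if (Sum.inl (hb (kpos hk)) : Fin k ⊕ Fin l) = Sum.inl (hb (kpos hk)) then (1:ℕ) else 0) = 1 :=
    if_pos rfl
  rw [hH] at hd
  omega

lemma deg_pt (hk : 3 ≤ k) (hl : 0 < l) (a : Fin l) :
    (LG k l).degree (Ψ hk hl (.inl ((Sum.inr a : Fin k ⊕ Fin l), true))) = 2 := by
  have hd := deg_inl hk hl (((Sum.inr a : Fin k ⊕ Fin l), true) : EP k l)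
  rw [cnt_same_edge hk] at hd
  rw [cnt_pe hk _ ⟨a, rfl⟩] at hd
  have hFv : Fv hk (((Sum.inr a : Fin k ⊕ Fin l), true) : EP k l) = Sum.inr a := rfl
  rw [hFv] at hd
  rw [NV_leaf hk] at hd
  rw [if_neg (by simp)] at hd
  omega

lemma sum_ite_const {n : ℕ} (i₀ : Fin n) (A B : ℕ) :
    ∑ i : Fin n, (if i = i₀ then A else B) = A + (n-1)*B := by
  classical
  rw [Finset.sum_ite, Finset.sum_const, Finset.sum_const]
  have h1 : Finset.filter (fun i => i = i₀) Finset.univ = {i₀} := by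
    rw [Finset.filter_eq' Finset.univ i₀]
    simp
  have h2 : Finset.filter (fun i => ¬ i = i₀) Finset.univ = Finset.univ.erase i₀ := by
    rw [← Finset.filter_ne' Finset.univ i₀]
  rw [h1, h2, Finset.card_erase_of_mem (Finset.mem_univ i₀)]
  simp [mul_comm]

lemma sum_ite_fsucc (hk : 3 ≤ k) (i₀ : Fin k) (A B : ℕ) :
    ∑ i : Fin k, (if fsucc i = i₀ then A else B) = A + (k-1)*B := by
  rw [(fsucc_bij hk).sum_comp (fun j => if j = i₀ then A else B)]
  exact sum_ite_const i₀ A B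

lemma M1_val (hk : 3 ≤ k) (hl : 0 < l) :
    M1 (LG k l) = 2*((l+3)^2 + (k-1)*4) + l*((l+4)^2 + 4) + (l*4 + (l+2)^2) := by
  rw [M1]
  rw [← (Ψ hk hl).sum_comp (fun v => (LG k l).degree v ^ 2)]
  rw [Fintype.sum_sum_type]
  have hcp : (∑ c : CP l, (LG k l).degree (Ψ hk hl (.inr c)) ^2) = l*4 + (l+2)^2 := by
    rw [Fintype.sum_sum_type]
    have h1 : ∀ a : Fin l, (LG k l).degree (Ψ hk hl (.inr (.inl a)))^2 = 4 := by
      intro a; rw [deg_t hk hl]; norm_num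
    have h2 : (∑ u : Unit, (LG k l).degree (Ψ hk hl (.inr (.inr u)))^2) = (l+2)^2 := by
      have : ∀ u : Unit, (LG k l).degree (Ψ hk hl (.inr (.inr u)))^2 = (l+2)^2 := by
        intro u; rw [deg_hub hk hl]
      simp [this]
    rw [Finset.sum_congr rfl (fun a _ => h1 a), h2, Finset.sum_const]
    simp [mul_comm]
  have hep : (∑ p : EP k l, (LG k l).degree (Ψ hk hl (.inl p)) ^2)
      = 2*((l+3)^2 + (k-1)*4) + l*((l+4)^2 + 4) := by
    rw [Fintype.sum_prod_type, Fintype.sum_sum_type]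
    have hc : ∀ i : Fin k, (∑ b : Bool, (LG k l).degree (Ψ hk hl (.inl ((Sum.inl i : Fin k ⊕ Fin l), b))) ^2)
        = (if fsucc i = hb (kpos hk) then (l+3)^2 else 4) + (if i = hb (kpos hk) then (l+3)^2 else 4) := by
      intro i
      rw [Fintype.sum_bool, deg_ct hk hl, deg_cf hk hl]
      congr 1
      · by_cases h : fsucc i = hb (kpos hk) <;> simp [h] <;> norm_num
      · by_cases h : i = hb (kpos hk) <;> simp [h] <;> norm_num
    have hp : ∀ a : Fin l, (∑ b : Bool, (LG k l).degree (Ψ hk hl (.inl ((Sum.inr a : Fin k ⊕ Fin l), b))) ^2)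
        = 4 + (l+4)^2 := by
      intro a
      rw [Fintype.sum_bool, deg_pt hk hl, deg_pf hk hl]
      norm_num
    rw [Finset.sum_congr rfl (fun i _ => hc i), Finset.sum_congr rfl (fun a _ => hp a)]
    rw [Finset.sum_add_distrib, sum_ite_fsucc hk _ _ _, sum_ite_const _ _ _, Finset.sum_const]
    simp only [Finset.card_univ, Fintype.card_fin, smul_eq_mul]
    ring
  rw [hep, hcp]

end CS7

end Zagreb

open Zagreb in
theorem stmt13 (n k : ℕ) (hk : 3 ≤ k) (hn : k + 1 ≤ n) :
    (M1 (lineCutGraph (subdivision (cycleStar k (n - k)))) : ℤ) =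
      (n : ℤ) ^ 3 + (11 - 3 * k) * n ^ 2 + (3 * k ^ 2 - 22 * k + 40) * n
        - k ^ 3 + 11 * k ^ 2 - 32 * k + 14 := by
  obtain ⟨K, rfl⟩ : ∃ K, k = K + 3 := ⟨k - 3, by omega⟩
  obtain ⟨M, rfl⟩ : ∃ M, n = (K + 3) + (M + 1) := ⟨n - (K + 3) - 1, by omega⟩
  have hsub : (K + 3) + (M + 1) - (K + 3) = M + 1 := by omega
  rw [hsub]
  rw [CS7.M1_val (by omega) (by omega)]
  have h2 : K + 3 - 1 = K + 2 := by omega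
  rw [h2]
  push_cast
  ring
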